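/- Let p be a monic complex polynomial of degree n ≥ 2 with zeros z_1,…,z_n (listed with multiplicity). Then max_{w : p'(w)=0} min_{1≤i≤n} |w − z_i| ≤ max_{1≤i≤n} |z_i|, and equality holds if and only if z_1 + … + z_n = 0 and min_{1≤i≤n} |z_i| = max_{1≤i≤n} |z_i|. -/

import Mathlib

open Polynomial
open Finset

private theorem evalDerivProd (n : ℕ) (z : Fin n → ℂ) (w : ℂ) :
    (Polynomial.derivative (∏ i, (X - C (z i)))).eval w
      = ∑ i, ∏ j ∈ univ.erase i, (w - z j) := by
  rw [Finset.prod_eq_multiset_prod, derivative_prod, ← Finset.sum_eq_multiset_sum]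
  rw [eval_finset_sum]
  refine Finset.sum_congr rfl fun i _ => ?_
  rw [← Finset.erase_val, ← Finset.prod_eq_multiset_prod]
  simp [eval_prod]

private theorem sumInvZero (n : ℕ) (z : Fin n → ℂ) (w : ℂ) (hz : ∀ i, w - z i ≠ 0)
    (hcrit : ∑ i, ∏ j ∈ univ.erase i, (w - z j) = 0) :
    ∑ i, (w - z i)⁻¹ = 0 := by
  have hP : ∏ j, (w - z j) ≠ 0 := Finset.prod_ne_zero_iff.2 fun j _ => hz j
  have key : ∀ i : Fin n, ∏ j ∈ univ.erase i, (w - z j) = (w - z i)⁻¹ * ∏ j, (w - z j) := by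
    intro i
    rw [← Finset.mul_prod_erase univ _ (Finset.mem_univ i)]
    field_simp [hz i]
  rw [Finset.sum_congr rfl (fun i _ => key i), ← Finset.sum_mul] at hcrit
  exact (mul_eq_zero.1 hcrit).resolve_right hP

private theorem sumNormSqSubOne (n : ℕ) (z : Fin n → ℂ) (w : ℂ) (hz : ∀ i, w - z i ≠ 0)
    (hinv : ∑ i, (w - z i)⁻¹ = 0) :
    ∑ i, Complex.normSq (z i * (z i - w)⁻¹ - 1)
      = (∑ i, Complex.normSq (z i * (z i - w)⁻¹)) - n := by
  set a : Fin n → ℂ := fun i => z i * (z i - w)⁻¹ with ha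
  have hzw : ∀ i, z i - w ≠ 0 := fun i h => hz i (by rw [← neg_sub] at h; simpa using neg_eq_zero.1 h)
  have hai : ∀ i, a i = 1 - w * (w - z i)⁻¹ := by
    intro i
    rw [ha]
    field_simp [hz i, hzw i]
    ring
  have hsa : ∑ i, a i = (n : ℂ) := by
    rw [Finset.sum_congr rfl fun i _ => hai i, Finset.sum_sub_distrib, ← Finset.mul_sum, hinv]
    simp
  have h1 : ∀ i : Fin n, Complex.normSq (a i - 1)
      = Complex.normSq (a i) + 1 - 2 * (a i).re := by
    intro i; rw [Complex.normSq_sub]; simp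
  rw [Finset.sum_congr rfl fun i _ => h1 i]
  rw [Finset.sum_sub_distrib, Finset.sum_add_distrib, ← Finset.mul_sum, ← Complex.re_sum, hsa]
  simp only [Complex.natCast_re, Finset.sum_const, Finset.card_univ, Fintype.card_fin,
    nsmul_eq_mul, mul_one]
  ring

private theorem normSqSumLower (n : ℕ) (z : Fin n → ℂ) (w : ℂ) (hz : ∀ i, w - z i ≠ 0)
    (hinv : ∑ i, (w - z i)⁻¹ = 0) :
    (n : ℝ) ≤ ∑ i, Complex.normSq (z i * (z i - w)⁻¹) := by
  have h0 : (0:ℝ) ≤ ∑ i, Complex.normSq (z i * (z i - w)⁻¹ - 1) :=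
    Finset.sum_nonneg fun i _ => Complex.normSq_nonneg _
  have := sumNormSqSubOne n z w hz hinv
  linarith

private theorem infLeSup (n : ℕ) (hn : 2 ≤ n)
    (z : Fin n → ℂ) (hne : (Finset.univ : Finset (Fin n)).Nonempty) (w : ℂ)
    (hcrit : ∑ i, ∏ j ∈ univ.erase i, (w - z j) = 0) :
    univ.inf' hne (fun i => ‖w - z i‖) ≤ univ.sup' hne fun i => ‖z i‖ := by
  set m := univ.inf' hne (fun i => ‖w - z i‖) with hm
  set R := univ.sup' hne (fun i => ‖z i‖) with hR
  obtain ⟨i₀, -⟩ := id hne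
  have hR0 : 0 ≤ R :=
    le_trans (norm_nonneg (z i₀)) (Finset.le_sup' (fun i => ‖z i‖) (Finset.mem_univ i₀))
  by_cases hex : ∃ i, w - z i = 0
  · obtain ⟨i, hi⟩ := hex
    calc m ≤ ‖w - z i‖ := Finset.inf'_le (fun i => ‖w - z i‖) (Finset.mem_univ i)
    _ = 0 := by rw [hi]; simp
    _ ≤ R := hR0
  · push_neg at hex
    have hinv := sumInvZero n z w hex hcrit
    have hlow := normSqSumLower n z w hex hinv
    have hm0 : 0 ≤ m := Finset.le_inf' hne _ fun i _ => norm_nonneg _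
    have hper : ∀ i : Fin n, Complex.normSq (z i * (z i - w)⁻¹) * m ^ 2 ≤ R ^ 2 := by
      intro i
      have hzw : z i - w ≠ 0 := fun h => hex i (by rw [← neg_sub] at h; simpa using neg_eq_zero.1 h)
      have h1 : m ≤ ‖z i - w‖ := by
        rw [norm_sub_rev]
        exact Finset.inf'_le (fun i => ‖w - z i‖) (Finset.mem_univ i)
      have h2 : m ^ 2 ≤ Complex.normSq (z i - w) := by
        rw [← Complex.sq_norm]
        exact pow_le_pow_left₀ hm0 h1 2
      have h3 : Complex.normSq (z i) ≤ R ^ 2 := by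
        rw [← Complex.sq_norm]
        exact pow_le_pow_left₀ (norm_nonneg _)
          (Finset.le_sup' (fun i => ‖z i‖) (Finset.mem_univ i)) 2
      have h4 : Complex.normSq (z i * (z i - w)⁻¹) * Complex.normSq (z i - w)
          = Complex.normSq (z i) := by
        rw [Complex.normSq_mul, Complex.normSq_inv]
        field_simp [Complex.normSq_eq_zero.not.2 hzw]
      calc Complex.normSq (z i * (z i - w)⁻¹) * m ^ 2
          ≤ Complex.normSq (z i * (z i - w)⁻¹) * Complex.normSq (z i - w) :=
            mul_le_mul_of_nonneg_left h2 (Complex.normSq_nonneg _)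
        _ = Complex.normSq (z i) := h4
        _ ≤ R ^ 2 := h3
    have hsum : (∑ i, Complex.normSq (z i * (z i - w)⁻¹)) * m ^ 2 ≤ n * R ^ 2 := by
      rw [Finset.sum_mul]
      calc (∑ i, Complex.normSq (z i * (z i - w)⁻¹) * m ^ 2) ≤ ∑ _i : Fin n, R ^ 2 :=
            Finset.sum_le_sum fun i _ => hper i
        _ = n * R ^ 2 := by rw [Finset.sum_const, Finset.card_univ, Fintype.card_fin, nsmul_eq_mul]
    have hn' : (2:ℝ) ≤ (n:ℝ) := by exact_mod_cast hn
    have h1 : (n:ℝ) * m ^ 2 ≤ (∑ i, Complex.normSq (z i * (z i - w)⁻¹)) * m ^ 2 :=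
      mul_le_mul_of_nonneg_right hlow (sq_nonneg m)
    have h3 : m ^ 2 ≤ R ^ 2 := by
      have hnpos : (0:ℝ) < n := by linarith
      exact le_of_mul_le_mul_left (by calc (n:ℝ) * m ^ 2 ≤ _ := h1
        _ ≤ (n:ℝ) * R ^ 2 := hsum) hnpos
    exact (pow_le_pow_iff_left₀ hm0 hR0 two_ne_zero).1 h3

private theorem sumInvConj (n : ℕ) (z : Fin n → ℂ) (R : ℝ)
    (h : ∀ i, ‖z i‖ = R) :
    ∑ i, (z i)⁻¹ = (starRingEnd ℂ) (∑ i, z i) * ((R^2 : ℝ) : ℂ)⁻¹ := by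
  rw [map_sum, Finset.sum_mul]
  refine Finset.sum_congr rfl fun i _ => ?_
  rw [Complex.inv_def]
  congr 1
  rw [← Complex.sq_norm, h i]
  norm_cast

private theorem eqCase (n : ℕ) (hn : 2 ≤ n)
    (z : Fin n → ℂ) (hne : (Finset.univ : Finset (Fin n)).Nonempty) (w : ℂ)
    (hcrit : ∑ i, ∏ j ∈ univ.erase i, (w - z j) = 0)
    (heq : univ.inf' hne (fun i => ‖w - z i‖)
      = univ.sup' hne fun i => ‖z i‖) :
    (∑ i, z i = 0) ∧ univ.inf' hne (fun i => ‖z i‖)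
      = univ.sup' hne fun i => ‖z i‖ := by
  set m := univ.inf' hne (fun i => ‖w - z i‖) with hm
  set R := univ.sup' hne (fun i => ‖z i‖) with hR
  obtain ⟨i₀, -⟩ := id hne
  have hm0 : 0 ≤ m := Finset.le_inf' hne _ fun i _ => norm_nonneg _
  by_cases hex : ∃ i, w - z i = 0
  · -- then m = 0 = R, all z i = 0
    obtain ⟨i, hi⟩ := hex
    have hmz : m ≤ 0 := by
      calc m ≤ ‖w - z i‖ := Finset.inf'_le (fun i => ‖w - z i‖) (Finset.mem_univ i)
      _ = 0 := by rw [hi]; simp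
    have hR0 : R = 0 := by rw [← heq]; linarith
    have hzi : ∀ j, z j = 0 := by
      intro j
      have h1 : ‖z j‖ ≤ R := Finset.le_sup' (fun i => ‖z i‖) (Finset.mem_univ j)
      have h2 := norm_nonneg (z j)
      exact norm_eq_zero.1 (by linarith [hR0 ▸ h1])
    refine ⟨by simp [hzi], ?_⟩
    rw [hR0]
    apply le_antisymm
    · calc univ.inf' hne (fun i => ‖z i‖) ≤ ‖z i₀‖ :=
            Finset.inf'_le (fun i => ‖z i‖) (Finset.mem_univ i₀)
        _ = 0 := by rw [hzi i₀]; simp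
    · exact Finset.le_inf' hne _ fun i _ => norm_nonneg _
  · push_neg at hex
    have hinv := sumInvZero n z w hex hcrit
    have hlow := normSqSumLower n z w hex hinv
    have hidentity := sumNormSqSubOne n z w hex hinv
    have hzw : ∀ i, z i - w ≠ 0 :=
      fun i h => hex i (by rw [← neg_sub] at h; simpa using neg_eq_zero.1 h)
    have hup : ∀ i : Fin n, Complex.normSq (z i * (z i - w)⁻¹) ≤ 1 := by
      intro i
      have h1 : ‖z i‖ ≤ R := Finset.le_sup' (fun i => ‖z i‖) (Finset.mem_univ i)
      have h2 : R ≤ ‖z i - w‖ := by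
        rw [norm_sub_rev, ← heq]
        exact Finset.inf'_le (fun i => ‖w - z i‖) (Finset.mem_univ i)
      have h4 : Complex.normSq (z i) ≤ Complex.normSq (z i - w) := by
        rw [← Complex.sq_norm, ← Complex.sq_norm]
        exact pow_le_pow_left₀ (norm_nonneg _) (le_trans h1 h2) 2
      have h5 : 0 < Complex.normSq (z i - w) := Complex.normSq_pos.2 (hzw i)
      rw [Complex.normSq_mul, Complex.normSq_inv]
      rw [← div_eq_mul_inv, div_le_one h5]
      exact h4
    have hsumle : ∑ i, Complex.normSq (z i * (z i - w)⁻¹) ≤ (n:ℝ) := by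
      calc ∑ i, Complex.normSq (z i * (z i - w)⁻¹) ≤ ∑ _i : Fin n, (1:ℝ) :=
            Finset.sum_le_sum fun i _ => hup i
        _ = n := by simp
    have hzerosum : ∑ i, Complex.normSq (z i * (z i - w)⁻¹ - 1) = 0 := by
      rw [hidentity]; linarith
    have hall : ∀ i : Fin n, z i = z i - w := by
      intro i
      have h6 := (Finset.sum_eq_zero_iff_of_nonneg
        (fun i _ => Complex.normSq_nonneg (z i * (z i - w)⁻¹ - 1))).1 hzerosum i (Finset.mem_univ i)
      have h7 : z i * (z i - w)⁻¹ = 1 := sub_eq_zero.1 (Complex.normSq_eq_zero.1 h6)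
      field_simp [hzw i] at h7
      exact h7
    have hw0 : w = 0 := sub_eq_self.1 (hall i₀).symm
    have hfun : (fun i => ‖w - z i‖) = fun i => ‖z i‖ := by
      funext i
      rw [hw0, zero_sub, norm_neg]
    rw [hm, hfun] at heq
    refine ⟨?_, heq⟩
    -- all |z i| = R
    have habs : ∀ i, ‖z i‖ = R := by
      intro i
      refine le_antisymm (Finset.le_sup' (fun i => ‖z i‖) (Finset.mem_univ i)) ?_
      rw [← heq]
      exact Finset.inf'_le (fun i => ‖z i‖) (Finset.mem_univ i)
    have hz0 : z i₀ ≠ 0 := by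
      have := hzw i₀; rw [hw0, sub_zero] at this; exact this
    have hRne : R ≠ 0 := by
      rw [← habs i₀]
      exact norm_ne_zero_iff.2 hz0
    have hinv0 : ∑ i, (z i)⁻¹ = 0 := by
      rw [hw0] at hinv
      simp only [zero_sub, inv_neg] at hinv
      rw [Finset.sum_neg_distrib, neg_eq_zero] at hinv
      exact hinv
    rw [sumInvConj n z R habs] at hinv0
    have hc : ((R^2 : ℝ) : ℂ)⁻¹ ≠ 0 := by
      simp [pow_eq_zero_iff, hRne]
    have h8 := (mul_eq_zero.1 hinv0).resolve_right hc
    have h9 := congrArg (starRingEnd ℂ) h8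
    simpa using h9

private theorem converseCase (n : ℕ) (hn : 2 ≤ n)
    (z : Fin n → ℂ) (hne : (Finset.univ : Finset (Fin n)).Nonempty)
    (h1 : ∑ i, z i = 0)
    (h2 : univ.inf' hne (fun i => ‖z i‖)
      = univ.sup' hne fun i => ‖z i‖) :
    (∑ i, ∏ j ∈ univ.erase i, ((0:ℂ) - z j) = 0) ∧
      univ.inf' hne (fun i => ‖(0:ℂ) - z i‖)
        = univ.sup' hne fun i => ‖z i‖ := by
  set R := univ.sup' hne (fun i => ‖z i‖) with hR
  have hfun : (fun i => ‖(0:ℂ) - z i‖) = fun i => ‖z i‖ := by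
    funext i; rw [zero_sub, norm_neg]
  refine ⟨?_, by rw [hfun]; exact h2⟩
  by_cases hR0 : R = 0
  · -- all z i = 0, each product contains a zero factor
    have hzi : ∀ j, z j = 0 := by
      intro j
      have ha : ‖z j‖ ≤ R := Finset.le_sup' (fun i => ‖z i‖) (Finset.mem_univ j)
      have hb := norm_nonneg (z j)
      exact norm_eq_zero.1 (by rw [hR0] at ha; linarith)
    refine Finset.sum_eq_zero fun i _ => ?_
    have hcard : (univ.erase i).Nonempty := by
      rw [← Finset.card_pos, Finset.card_erase_of_mem (Finset.mem_univ i), Finset.card_univ,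
        Fintype.card_fin]
      omega
    obtain ⟨j, hj⟩ := hcard
    exact Finset.prod_eq_zero hj (by rw [hzi j]; simp)
  · have habs : ∀ i, ‖z i‖ = R := by
      intro i
      refine le_antisymm (Finset.le_sup' (fun i => ‖z i‖) (Finset.mem_univ i)) ?_
      rw [← h2]
      exact Finset.inf'_le (fun i => ‖z i‖) (Finset.mem_univ i)
    have hz : ∀ i, (0:ℂ) - z i ≠ 0 := by
      intro i h
      rw [zero_sub, neg_eq_zero] at h
      exact hR0 (by rw [← habs i, h]; simp)
    have hP : ∏ j, ((0:ℂ) - z j) ≠ 0 := Finset.prod_ne_zero_iff.2 fun j _ => hz j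
    have key : ∀ i : Fin n, ∏ j ∈ univ.erase i, ((0:ℂ) - z j)
        = ((0:ℂ) - z i)⁻¹ * ∏ j, ((0:ℂ) - z j) := by
      intro i
      rw [← Finset.mul_prod_erase univ _ (Finset.mem_univ i), inv_mul_cancel_left₀ (hz i)]
    rw [Finset.sum_congr rfl (fun i _ => key i), ← Finset.sum_mul]
    have hinv0 : ∑ i, ((0:ℂ) - z i)⁻¹ = 0 := by
      simp only [zero_sub, inv_neg]
      rw [Finset.sum_neg_distrib, neg_eq_zero]
      rw [sumInvConj n z R habs, h1]
      simp
    rw [hinv0, zero_mul]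


/-- For a monic polynomial `p = ∏ (X - z_i)` of degree `n ≥ 2`, the directed Hausdorff
distance from the critical points of `p` to its zeros is at most `max_i |z_i|`, with
equality iff `∑ z_i = 0` and `min_i |z_i| = max_i |z_i|`. -/
theorem critical_points_directed_hausdorff (n : ℕ) (hn : 2 ≤ n)
    (z : Fin n → ℂ) (p : Polynomial ℂ)
    (hp : p = ∏ i, (Polynomial.X - Polynomial.C (z i))) :
    have hne : (Finset.univ : Finset (Fin n)).Nonempty :=
      ⟨⟨0, by omega⟩, Finset.mem_univ _⟩
    (sSup ((fun w => Finset.univ.inf' hne fun i => ‖w - z i‖) ''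
        {w : ℂ | (Polynomial.derivative p).eval w = 0})
      ≤ Finset.univ.sup' hne fun i => ‖z i‖) ∧
    (sSup ((fun w => Finset.univ.inf' hne fun i => ‖w - z i‖) ''
        {w : ℂ | (Polynomial.derivative p).eval w = 0})
        = Finset.univ.sup' hne (fun i => ‖z i‖) ↔
      (∑ i, z i = 0 ∧
        Finset.univ.inf' hne (fun i => ‖z i‖)
          = Finset.univ.sup' hne fun i => ‖z i‖)) := by
  intro hne
  set R := univ.sup' hne (fun i => ‖z i‖) with hRdef
  have hcritset : {w : ℂ | (Polynomial.derivative p).eval w = 0}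
      = {w : ℂ | ∑ i, ∏ j ∈ univ.erase i, (w - z j) = 0} := by
    ext w
    simp only [Set.mem_setOf_eq, hp, evalDerivProd]
  set S := ((fun w => Finset.univ.inf' hne fun i => ‖w - z i‖) ''
      {w : ℂ | (Polynomial.derivative p).eval w = 0}) with hSdef
  -- degree facts
  have hpdeg : p.natDegree = n := by
    rw [hp, natDegree_prod _ _ fun i _ => X_sub_C_ne_zero (z i)]
    simp
  have hd0 : Polynomial.derivative p ≠ 0 := by
    intro h
    have := natDegree_eq_zero_of_derivative_eq_zero h
    omega
  have hdpos : 0 < (Polynomial.derivative p).degree := by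
    rw [degree_derivative_eq p (by rw [hpdeg]; omega), hpdeg]
    exact_mod_cast (by omega : 0 < n - 1)
  have hSne : S.Nonempty := by
    obtain ⟨w, hw⟩ := Complex.exists_root hdpos
    exact ⟨_, ⟨w, hw, rfl⟩⟩
  have hSbdd : ∀ x ∈ S, x ≤ R := by
    rintro x ⟨w, hw, rfl⟩
    rw [hcritset] at hw
    exact infLeSup n hn z hne w hw
  have part1 : sSup S ≤ R := csSup_le hSne hSbdd
  refine ⟨part1, ?_, ?_⟩
  · -- forward
    intro hsup
    have hfin : S.Finite := by
      rw [hSdef]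
      exact (Polynomial.finite_setOf_isRoot hd0).image _
    have hmem := hSne.csSup_mem hfin
    obtain ⟨w, hw, hval⟩ := hmem
    rw [hcritset] at hw
    rw [hsup] at hval
    exact eqCase n hn z hne w hw hval
  · -- backward
    rintro ⟨h1, h2⟩
    obtain ⟨hcrit0, hval0⟩ := converseCase n hn z hne h1 h2
    have h0mem : (0:ℂ) ∈ {w : ℂ | (Polynomial.derivative p).eval w = 0} := by
      rw [hcritset]; exact hcrit0
    refine le_antisymm part1 ?_
    calc R = univ.inf' hne (fun i => ‖(0:ℂ) - z i‖) := hval0.symm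
      _ ≤ sSup S := le_csSup ⟨R, hSbdd⟩ ⟨0, h0mem, rfl⟩
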